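/- Let Q be a connected tight multimatroid containing an element e such that Q|e is disconnected. If X is a proper separator of Q|e, then Q has a circuit C such that e ∈ C and C ⊆ X ∪ {e}. -/

import Mathlib

noncomputable section
open scoped Classical

/-- The data of a multimatroid: a finite ground set `U`, a partition `Ω` of `U` into
nonempty skew classes, and a rank function `r` (only its values on subtransversals matter). -/
structure MultimatroidData (α : Type*) [DecidableEq α] where
  U : Finset α
  Ω : Finset (Finset α)
  r : Finset α → ℕ
  classes_nonempty : ∀ ω ∈ Ω, ω.Nonempty
  classes_subset : ∀ ω ∈ Ω, ω ⊆ U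
  classes_cover : ∀ x ∈ U, ∃ ω ∈ Ω, x ∈ ω
  classes_disjoint : ∀ ω₁ ∈ Ω, ∀ ω₂ ∈ Ω, ω₁ ≠ ω₂ → Disjoint ω₁ ω₂

variable {α : Type*} [DecidableEq α]

/-- A subtransversal: a set meeting each skew class in at most one element. -/
def MultimatroidData.Subtr (Q : MultimatroidData α) (A : Finset α) : Prop :=
  A ⊆ Q.U ∧ ∀ ω ∈ Q.Ω, (A ∩ ω).card ≤ 1

/-- A multimatroid: the rank function satisfies axioms (1)–(4). -/
structure Multimatroid (α : Type*) [DecidableEq α] extends MultimatroidData α where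
  rank_empty : r ∅ = 0
  rank_step : ∀ A x ω, toMultimatroidData.Subtr A → ω ∈ Ω → x ∈ ω → Disjoint ω A →
    r A ≤ r (insert x A) ∧ r (insert x A) ≤ r A + 1
  rank_submod : ∀ A B, toMultimatroidData.Subtr (A ∪ B) →
    r (A ∪ B) + r (A ∩ B) ≤ r A + r B
  rank_skew : ∀ A x y ω, toMultimatroidData.Subtr A → ω ∈ Ω → x ∈ ω → y ∈ ω → x ≠ y →
    Disjoint ω A → 2 * r A + 1 ≤ r (insert x A) + r (insert y A)

namespace Multimatroid

variable (Q : Multimatroid α)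

/-- Subtransversals of a multimatroid. -/
def Subtr (A : Finset α) : Prop := Q.toMultimatroidData.Subtr A

/-- The skew classes of the minor `Q|A`: those skew classes of `Q` disjoint from `A`. -/
def minorClasses (A : Finset α) : Finset (Finset α) := Q.Ω.filter fun ω => Disjoint ω A

/-- The ground set of the minor `Q|A`. -/
def minorGround (A : Finset α) : Finset α := (Q.minorClasses A).biUnion id

/-- Subtransversals of the minor `Q|A`. -/
def MinorSubtr (A S : Finset α) : Prop :=
  S ⊆ Q.minorGround A ∧ ∀ ω ∈ Q.minorClasses A, (S ∩ ω).card ≤ 1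

/-- `X` is a separator of the minor `Q|A` (whose rank function is
`S ↦ r(S ∪ A) − r(A)`, here expressed additively). -/
def IsMinorSeparator (A X : Finset α) : Prop :=
  X ⊆ Q.minorGround A ∧ (∀ ω ∈ Q.minorClasses A, ω ⊆ X ∨ Disjoint ω X) ∧
  ∀ S, Q.MinorSubtr A S →
    Q.r (S ∪ A) + Q.r A = Q.r ((S ∩ X) ∪ A) + Q.r ((S \ X) ∪ A)

/-- The minor `Q|A` is connected: it has no proper separator. -/
def MinorConnected (A : Finset α) : Prop :=
  ¬ ∃ X, Q.IsMinorSeparator A X ∧ X.Nonempty ∧ X ≠ Q.minorGround A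

/-- `X` is a separator of `Q`: a union of skew classes such that the rank is additive
over the partition `(X, U − X)`. -/
def IsSeparator (X : Finset α) : Prop :=
  X ⊆ Q.U ∧ (∀ ω ∈ Q.Ω, ω ⊆ X ∨ Disjoint ω X) ∧
  ∀ S, Q.Subtr S → Q.r S = Q.r (S ∩ X) + Q.r (S \ X)

/-- `Q` is connected: it has no proper separator. -/
def Connected : Prop := ¬ ∃ X, Q.IsSeparator X ∧ X.Nonempty ∧ X ≠ Q.U

/-- `A` is a near-transversal avoiding the skew class `ω`: a subtransversal disjoint
from `ω` meeting every other skew class. -/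
def NearTransversalAvoiding (ω A : Finset α) : Prop :=
  Q.Subtr A ∧ Disjoint A ω ∧ ∀ ω' ∈ Q.Ω, ω' ≠ ω → (A ∩ ω').Nonempty

/-- A multimatroid is non-degenerate if every skew class has at least two elements. -/
def Nondegenerate : Prop := ∀ ω ∈ Q.Ω, 2 ≤ ω.card

/-- A multimatroid is tight if it is non-degenerate and for every skew class `ω` and
every near-transversal `A` avoiding `ω`, `Σ_{x∈ω} (r(A∪x) − r(A)) = |ω| − 1`. -/
def Tight : Prop :=
  Q.Nondegenerate ∧ ∀ ω ∈ Q.Ω, ∀ A, Q.NearTransversalAvoiding ω A →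
    ∑ x ∈ ω, (Q.r (insert x A) - Q.r A) = ω.card - 1

/-- An independent set: a subtransversal whose rank equals its cardinality. -/
def Indep (S : Finset α) : Prop := Q.Subtr S ∧ Q.r S = S.card

/-- A basis: a maximal independent set. -/
def IsBasis (B : Finset α) : Prop := Q.Indep B ∧ ∀ S, Q.Indep S → B ⊆ S → S = B

/-- A circuit: a dependent subtransversal all of whose proper subsets are independent. -/
def IsCircuit (C : Finset α) : Prop :=
  Q.Subtr C ∧ Q.r C ≠ C.card ∧ ∀ C' ⊂ C, Q.r C' = C'.card

end Multimatroid
namespace Multimatroid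

variable {α : Type*} [DecidableEq α] (Q : Multimatroid α)

lemma _root_.Finset.unionSingleton {β : Type*} [DecidableEq β] (A : Finset β) (a : β) :
    A ∪ {a} = insert a A := by ext; simp [or_comm]

lemma class_eq_of_mem {ω₁ ω₂ : Finset α} (h1 : ω₁ ∈ Q.Ω) (h2 : ω₂ ∈ Q.Ω) {x : α}
    (hx1 : x ∈ ω₁) (hx2 : x ∈ ω₂) : ω₁ = ω₂ := by
  by_contra hne
  exact Finset.disjoint_left.mp (Q.classes_disjoint ω₁ h1 ω₂ h2 hne) hx1 hx2

lemma subtr_subset {A B : Finset α} (hAB : A ⊆ B) (hB : Q.Subtr B) : Q.Subtr A := by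
  refine ⟨hAB.trans hB.1, fun ω hω => le_trans ?_ (hB.2 ω hω)⟩
  exact Finset.card_le_card (Finset.inter_subset_inter hAB (Finset.Subset.refl _))

lemma subtr_insert_disjoint {A : Finset α} {x : α} (h : Q.Subtr (insert x A)) (hxA : x ∉ A)
    {ω : Finset α} (hω : ω ∈ Q.Ω) (hxω : x ∈ ω) : Disjoint ω A := by
  rw [Finset.disjoint_left]
  intro a haω haA
  have hne : a ≠ x := fun h' => hxA (h' ▸ haA)
  have hsub : ({x, a} : Finset α) ⊆ insert x A ∩ ω := by
    intro z hz
    rcases Finset.mem_insert.mp hz with rfl | hz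
    · exact Finset.mem_inter.mpr ⟨Finset.mem_insert_self _ _, hxω⟩
    · rw [Finset.mem_singleton] at hz
      subst hz
      exact Finset.mem_inter.mpr ⟨Finset.mem_insert_of_mem haA, haω⟩
  have h2 : ({x, a} : Finset α).card = 2 := by
    rw [Finset.card_insert_of_notMem (by simp [Ne.symm hne]), Finset.card_singleton]
  have := (Finset.card_le_card hsub).trans (h.2 ω hω)
  omega

lemma rank_insert_bounds {A : Finset α} {x : α} (h : Q.Subtr (insert x A)) (hxA : x ∉ A) :
    Q.r A ≤ Q.r (insert x A) ∧ Q.r (insert x A) ≤ Q.r A + 1 := by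
  have hxU : x ∈ Q.U := h.1 (Finset.mem_insert_self _ _)
  obtain ⟨ω, hω, hxω⟩ := Q.classes_cover x hxU
  exact Q.rank_step A x ω (Q.subtr_subset (Finset.subset_insert _ _) h) hω hxω
    (Q.subtr_insert_disjoint h hxA hω hxω)

lemma rank_insert_dichot {A : Finset α} {x : α} (h : Q.Subtr (insert x A)) (hxA : x ∉ A) :
    Q.r (insert x A) = Q.r A ∨ Q.r (insert x A) = Q.r A + 1 := by
  have := Q.rank_insert_bounds h hxA
  omega

lemma rank_le_of_subset : ∀ (n : ℕ) {A B : Finset α}, (B \ A).card = n → A ⊆ B →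
    Q.Subtr B → Q.r A ≤ Q.r B := by
  intro n
  induction n with
  | zero =>
    intro A B hc hAB _
    have : B ⊆ A := fun b hb => by
      by_contra hbA
      have : b ∈ B \ A := Finset.mem_sdiff.mpr ⟨hb, hbA⟩
      have := Finset.card_eq_zero.mp hc
      simp [this] at *
    rw [Finset.Subset.antisymm hAB this]
  | succ n ih =>
    intro A B hc hAB hB
    have hne : (B \ A).Nonempty := Finset.card_pos.mp (by omega)
    obtain ⟨x, hx⟩ := hne
    obtain ⟨hxB, hxA⟩ := Finset.mem_sdiff.mp hx
    have hsub : insert x A ⊆ B := Finset.insert_subset hxB hAB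
    have hsubtr : Q.Subtr (insert x A) := Q.subtr_subset hsub hB
    have h1 : Q.r A ≤ Q.r (insert x A) := (Q.rank_insert_bounds hsubtr hxA).1
    have hcard : (B \ insert x A).card = n := by
      have : B \ insert x A = (B \ A).erase x := by
        ext z
        simp only [Finset.mem_sdiff, Finset.mem_insert, Finset.mem_erase]
        tauto
      rw [this, Finset.card_erase_of_mem hx, hc]
      omega
    exact h1.trans (ih hcard hsub hB)

lemma rank_mono {A B : Finset α} (hAB : A ⊆ B) (hB : Q.Subtr B) : Q.r A ≤ Q.r B :=
  Q.rank_le_of_subset (B \ A).card rfl hAB hB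

lemma submod_insert {A B : Finset α} {x : α} (hAB : A ⊆ B) (hxB : x ∉ B)
    (h : Q.Subtr (insert x B)) :
    Q.r (insert x B) + Q.r A ≤ Q.r (insert x A) + Q.r B := by
  have hu : insert x A ∪ B = insert x B := by
    rw [Finset.insert_union, Finset.union_eq_right.mpr hAB]
  have hi : insert x A ∩ B = A := by
    rw [Finset.insert_inter_of_notMem hxB, Finset.inter_eq_left.mpr hAB]
  have := Q.rank_submod (insert x A) B (by rw [hu]; exact h)
  rw [hu, hi] at this
  omega

lemma tight_exists_zero (hT : Q.Tight) {ν N : Finset α} (hν : ν ∈ Q.Ω)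
    (hN : Q.NearTransversalAvoiding ν N) : ∃ y ∈ ν, Q.r (insert y N) = Q.r N := by
  by_contra hcon
  push_neg at hcon
  have hterm : ∀ y ∈ ν, Q.r (insert y N) - Q.r N = 1 := by
    intro y hy
    have hb := Q.rank_step N y ν hN.1 hν hy (Finset.disjoint_right.mpr
      (fun a ha => Finset.disjoint_left.mp hN.2.1 ha))
    have := hcon y hy
    omega
  have hsum := hT.2 ν hν N hN
  rw [Finset.sum_congr rfl hterm] at hsum
  simp at hsum
  have h2 := hT.1 ν hν
  omega

lemma zero_unique {ν A : Finset α} {x y : α} (hA : Q.Subtr A) (hν : ν ∈ Q.Ω)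
    (hx : x ∈ ν) (hy : y ∈ ν) (hd : Disjoint ν A)
    (h1 : Q.r (insert x A) = Q.r A) (h2 : Q.r (insert y A) = Q.r A) : x = y := by
  by_contra hne
  have := Q.rank_skew A x y ν hA hν hx hy hne hd
  omega

end Multimatroid
namespace Multimatroid

variable {α : Type*} [DecidableEq α]

/-- Context for the main argument: `Q` tight, `e ∈ ωe`, `X` a side of a separator of `Q|e`,
together with the hypothesis `hH` that `e` is never spanned by a subtransversal of `X`. -/
structure Ctx (α : Type*) [DecidableEq α] where
  Q : Multimatroid α
  e : α
  X : Finset α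
  ωe : Finset α
  hT : Q.Tight
  hωe : ωe ∈ Q.Ω
  heωe : e ∈ ωe
  hX1 : X ⊆ Q.minorGround {e}
  hX2 : ∀ ω ∈ Q.minorClasses {e}, ω ⊆ X ∨ Disjoint ω X
  hX3 : ∀ S, Q.MinorSubtr {e} S →
    Q.r (S ∪ {e}) + Q.r {e} = Q.r ((S ∩ X) ∪ {e}) + Q.r ((S \ X) ∪ {e})
  hH : ∀ A, A ⊆ X → Q.Subtr A → Q.r (A ∪ {e}) = Q.r A + 1

namespace Ctx

variable (c : Ctx α)

def Y : Finset α := c.Q.minorGround {c.e} \ c.X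

def KX : Finset (Finset α) := (c.Q.minorClasses {c.e}).filter (fun ω => ω ⊆ c.X)

def KY : Finset (Finset α) := (c.Q.minorClasses {c.e}).filter (fun ω => Disjoint ω c.X)

lemma he : c.e ∈ c.Q.U := c.Q.classes_subset _ c.hωe c.heωe

lemma minor_mem_omega {ω : Finset α} (h : ω ∈ c.Q.minorClasses {c.e}) : ω ∈ c.Q.Ω :=
  (Finset.mem_filter.mp h).1

lemma minor_not_e {ω : Finset α} (h : ω ∈ c.Q.minorClasses {c.e}) : c.e ∉ ω := by
  have := (Finset.mem_filter.mp h).2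
  intro hc
  exact Finset.disjoint_left.mp this hc (Finset.mem_singleton_self _)

lemma mem_ground_iff {x : α} :
    x ∈ c.Q.minorGround {c.e} ↔ ∃ ω ∈ c.Q.minorClasses {c.e}, x ∈ ω := by
  simp [Multimatroid.minorGround]

lemma ground_subset_U : c.Q.minorGround {c.e} ⊆ c.Q.U := by
  intro x hx
  obtain ⟨ω, hω, hxω⟩ := (c.mem_ground_iff).mp hx
  exact c.Q.classes_subset ω (c.minor_mem_omega hω) hxω

lemma mem_minor_of_ne {ω : Finset α} (hω : ω ∈ c.Q.Ω) (hne : ω ≠ c.ωe) :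
    ω ∈ c.Q.minorClasses {c.e} := by
  refine Finset.mem_filter.mpr ⟨hω, Finset.disjoint_right.mpr ?_⟩
  intro x hx
  rw [Finset.mem_singleton] at hx
  subst hx
  exact fun hc => hne (c.Q.class_eq_of_mem hω c.hωe hc c.heωe)

lemma disj_omega_ground : Disjoint c.ωe (c.Q.minorGround {c.e}) := by
  rw [Finset.disjoint_right]
  intro x hx hxω
  obtain ⟨ω, hω, hxω'⟩ := (c.mem_ground_iff).mp hx
  have : ω = c.ωe := c.Q.class_eq_of_mem (c.minor_mem_omega hω) c.hωe hxω' hxω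
  exact c.minor_not_e hω (this ▸ c.heωe)

lemma e_not_ground : c.e ∉ c.Q.minorGround {c.e} :=
  Finset.disjoint_left.mp c.disj_omega_ground c.heωe

lemma e_not_X : c.e ∉ c.X := fun h => c.e_not_ground (c.hX1 h)

lemma disj_X_Y : Disjoint c.X c.Y := Finset.disjoint_sdiff

lemma disj_omega_X : Disjoint c.ωe c.X :=
  (c.disj_omega_ground).mono_right c.hX1

lemma disj_omega_Y : Disjoint c.ωe c.Y :=
  (c.disj_omega_ground).mono_right (Finset.sdiff_subset)

lemma class_trichot {ω : Finset α} (hω : ω ∈ c.Q.Ω) : ω = c.ωe ∨ ω ∈ c.KX ∨ ω ∈ c.KY := by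
  by_cases h : ω = c.ωe
  · exact Or.inl h
  · have hm := c.mem_minor_of_ne hω h
    rcases c.hX2 ω hm with h' | h'
    · exact Or.inr (Or.inl (Finset.mem_filter.mpr ⟨hm, h'⟩))
    · exact Or.inr (Or.inr (Finset.mem_filter.mpr ⟨hm, h'⟩))

lemma KX_sub_X {ω : Finset α} (h : ω ∈ c.KX) : ω ⊆ c.X := (Finset.mem_filter.mp h).2

lemma KX_mem_omega {ω : Finset α} (h : ω ∈ c.KX) : ω ∈ c.Q.Ω :=
  c.minor_mem_omega (Finset.mem_filter.mp h).1

lemma KY_mem_omega {ω : Finset α} (h : ω ∈ c.KY) : ω ∈ c.Q.Ω :=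
  c.minor_mem_omega (Finset.mem_filter.mp h).1

lemma KY_sub_Y {ω : Finset α} (h : ω ∈ c.KY) : ω ⊆ c.Y := by
  intro x hx
  refine Finset.mem_sdiff.mpr ⟨?_, ?_⟩
  · exact (c.mem_ground_iff).mpr ⟨ω, (Finset.mem_filter.mp h).1, hx⟩
  · exact fun hc => Finset.disjoint_left.mp (Finset.mem_filter.mp h).2 hx hc

lemma mem_X_class {x : α} (hx : x ∈ c.X) : ∃ ν ∈ c.KX, x ∈ ν := by
  obtain ⟨ω, hω, hxω⟩ := (c.mem_ground_iff).mp (c.hX1 hx)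
  rcases c.hX2 ω hω with h' | h'
  · exact ⟨ω, Finset.mem_filter.mpr ⟨hω, h'⟩, hxω⟩
  · exact absurd hx (Finset.disjoint_left.mp h' hxω)

lemma mem_Y_class {x : α} (hx : x ∈ c.Y) : ∃ ν ∈ c.KY, x ∈ ν := by
  obtain ⟨hxg, hxX⟩ := Finset.mem_sdiff.mp hx
  obtain ⟨ω, hω, hxω⟩ := (c.mem_ground_iff).mp hxg
  rcases c.hX2 ω hω with h' | h'
  · exact absurd (h' hxω) hxX
  · exact ⟨ω, Finset.mem_filter.mpr ⟨hω, h'⟩, hxω⟩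

lemma subtr_union_sep {A B : Finset α} (hA : c.Q.Subtr A) (hB : c.Q.Subtr B)
    (hsep : ∀ ω ∈ c.Q.Ω, A ∩ ω = ∅ ∨ B ∩ ω = ∅) : c.Q.Subtr (A ∪ B) := by
  refine ⟨Finset.union_subset hA.1 hB.1, fun ω hω => ?_⟩
  rw [Finset.union_inter_distrib_right]
  rcases hsep ω hω with h | h
  · rw [h, Finset.empty_union]; exact hB.2 ω hω
  · rw [h, Finset.union_empty]; exact hA.2 ω hω

lemma subtr_XY {A B : Finset α} (hAX : A ⊆ c.X) (hA : c.Q.Subtr A)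
    (hBY : B ⊆ c.Y) (hB : c.Q.Subtr B) : c.Q.Subtr (A ∪ B) := by
  refine c.subtr_union_sep hA hB (fun ω hω => ?_)
  rcases c.class_trichot hω with h | h | h
  · subst h
    left
    rw [Finset.eq_empty_iff_forall_notMem]
    intro x hx
    obtain ⟨h1, h2⟩ := Finset.mem_inter.mp hx
    exact Finset.disjoint_left.mp c.disj_omega_X h2 (hAX h1)
  · right
    rw [Finset.eq_empty_iff_forall_notMem]
    intro x hx
    obtain ⟨h1, h2⟩ := Finset.mem_inter.mp hx
    exact Finset.disjoint_left.mp c.disj_X_Y (c.KX_sub_X h h2) (hBY h1)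
  · left
    rw [Finset.eq_empty_iff_forall_notMem]
    intro x hx
    obtain ⟨h1, h2⟩ := Finset.mem_inter.mp hx
    exact Finset.disjoint_left.mp c.disj_X_Y (hAX h1) (c.KY_sub_Y h h2)

lemma subtr_single {x : α} (hx : x ∈ c.ωe) : c.Q.Subtr {x} := by
  refine ⟨Finset.singleton_subset_iff.mpr (c.Q.classes_subset _ c.hωe hx), fun ω hω => ?_⟩
  exact le_trans (Finset.card_le_card (Finset.inter_subset_left)) (by simp)

lemma subtr_XYw {A B : Finset α} {x : α} (hAX : A ⊆ c.X) (hA : c.Q.Subtr A)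
    (hBY : B ⊆ c.Y) (hB : c.Q.Subtr B) (hx : x ∈ c.ωe) : c.Q.Subtr (A ∪ B ∪ {x}) := by
  refine c.subtr_union_sep (c.subtr_XY hAX hA hBY hB) (c.subtr_single hx)
    (fun ω hω => ?_)
  by_cases hcase : ω = c.ωe
  · subst hcase
    left
    rw [Finset.eq_empty_iff_forall_notMem]
    intro z hz
    obtain ⟨h1, h2⟩ := Finset.mem_inter.mp hz
    rcases Finset.mem_union.mp h1 with h | h
    · exact Finset.disjoint_left.mp c.disj_omega_X h2 (hAX h)
    · exact Finset.disjoint_left.mp c.disj_omega_Y h2 (hBY h)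
  · right
    rw [Finset.eq_empty_iff_forall_notMem]
    intro z hz
    obtain ⟨h1, h2⟩ := Finset.mem_inter.mp hz
    rw [Finset.mem_singleton] at h1
    subst h1
    exact hcase (c.Q.class_eq_of_mem hω c.hωe h2 hx)

end Ctx

end Multimatroid
namespace Multimatroid

variable {α : Type*} [DecidableEq α]

namespace Ctx

variable (c : Ctx α)

lemma subtr_empty : c.Q.Subtr ∅ := ⟨Finset.empty_subset _, fun ω _ => by simp⟩

lemma re : c.Q.r {c.e} = 1 := by
  have h := c.hH ∅ (Finset.empty_subset _) c.subtr_empty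
  rw [Finset.empty_union, c.Q.rank_empty] at h
  exact h

lemma MS {A B : Finset α} (hAX : A ⊆ c.X) (hA : c.Q.Subtr A)
    (hBY : B ⊆ c.Y) (hB : c.Q.Subtr B) :
    c.Q.r (A ∪ B ∪ {c.e}) + 1 = c.Q.r (A ∪ {c.e}) + c.Q.r (B ∪ {c.e}) := by
  have hsub : c.Q.Subtr (A ∪ B) := c.subtr_XY hAX hA hBY hB
  have hms := c.hX3 (A ∪ B) ⟨Finset.union_subset (hAX.trans c.hX1)
      (hBY.trans (Finset.sdiff_subset)),
    fun ω hω => hsub.2 ω (c.minor_mem_omega hω)⟩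
  have h1 : (A ∪ B) ∩ c.X = A := by
    rw [Finset.union_inter_distrib_right,
      Finset.inter_eq_left.mpr hAX,
      Finset.eq_empty_iff_forall_notMem.mpr (fun x hx => Finset.disjoint_left.mp c.disj_X_Y
        (Finset.mem_inter.mp hx).2 (hBY (Finset.mem_inter.mp hx).1)), Finset.union_empty]
  have h2 : (A ∪ B) \ c.X = B := by
    rw [Finset.union_sdiff_distrib, Finset.sdiff_eq_empty_iff_subset.mpr hAX,
      Finset.empty_union, Finset.sdiff_eq_self_iff_disjoint.mpr
        ((c.disj_X_Y.mono_right hBY).symm)]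
  rw [h1, h2, c.re] at hms
  exact hms

lemma E2 {A B : Finset α} (hAX : A ⊆ c.X) (hA : c.Q.Subtr A)
    (hBY : B ⊆ c.Y) (hB : c.Q.Subtr B) :
    c.Q.r (A ∪ B ∪ {c.e}) = c.Q.r A + c.Q.r (B ∪ {c.e}) := by
  have h1 := c.MS hAX hA hBY hB
  have h2 := c.hH A hAX hA
  omega

lemma E3 {A B : Finset α} (hAX : A ⊆ c.X) (hA : c.Q.Subtr A)
    (hBY : B ⊆ c.Y) (hB : c.Q.Subtr B) :
    c.Q.r (A ∪ B) = c.Q.r A + c.Q.r B := by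
  have hup : c.Q.r (A ∪ B) + c.Q.r (A ∩ B) ≤ c.Q.r A + c.Q.r B :=
    c.Q.rank_submod A B (c.subtr_XY hAX hA hBY hB)
  have hie : A ∩ B = ∅ := Finset.eq_empty_iff_forall_notMem.mpr
    (fun x hx => Finset.disjoint_left.mp c.disj_X_Y
      (hAX (Finset.mem_inter.mp hx).1) (hBY (Finset.mem_inter.mp hx).2))
  rw [hie, c.Q.rank_empty] at hup
  have heAB : c.e ∉ A ∪ B := fun h => by
    rcases Finset.mem_union.mp h with h | h
    · exact c.e_not_X (hAX h)
    · exact c.e_not_ground (Finset.mem_sdiff.mp (hBY h)).1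
  have heB : c.e ∉ B := fun h => heAB (Finset.mem_union_right _ h)
  have hsw : c.Q.Subtr (insert c.e (A ∪ B)) := by
    rw [← Finset.unionSingleton]
    exact c.subtr_XYw hAX hA hBY hB c.heωe
  have hlow := c.Q.submod_insert (Finset.subset_union_right) heAB hsw
  have he2 : c.Q.r (insert c.e (A ∪ B)) = c.Q.r A + c.Q.r (B ∪ {c.e}) := by
    rw [← Finset.unionSingleton]
    exact c.E2 hAX hA hBY hB
  rw [he2, ← Finset.unionSingleton B c.e] at hlow
  have hswB : c.Q.Subtr (insert c.e B) := by
    rw [← Finset.unionSingleton]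
    have := c.subtr_XYw (Finset.empty_subset c.X) c.subtr_empty hBY hB c.heωe
    rwa [Finset.empty_union] at this
  have hBe : c.Q.r B ≤ c.Q.r (B ∪ {c.e}) := by
    rw [Finset.unionSingleton]
    exact (c.Q.rank_insert_bounds hswB heB).1
  omega

end Ctx

end Multimatroid
namespace Multimatroid

variable {α : Type*} [DecidableEq α] (Q : Multimatroid α)

lemma rank_us_bounds {A : Finset α} {x : α} (h : Q.Subtr (A ∪ {x})) (hxA : x ∉ A) :
    Q.r A ≤ Q.r (A ∪ {x}) ∧ Q.r (A ∪ {x}) ≤ Q.r A + 1 := by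
  rw [Finset.unionSingleton] at h ⊢
  exact Q.rank_insert_bounds h hxA

lemma rank_us_dichot {A : Finset α} {x : α} (h : Q.Subtr (A ∪ {x})) (hxA : x ∉ A) :
    Q.r (A ∪ {x}) = Q.r A ∨ Q.r (A ∪ {x}) = Q.r A + 1 := by
  have := Q.rank_us_bounds h hxA
  omega

lemma submod_us {A B : Finset α} {x : α} (hAB : A ⊆ B) (hxB : x ∉ B)
    (h : Q.Subtr (B ∪ {x})) :
    Q.r (B ∪ {x}) + Q.r A ≤ Q.r (A ∪ {x}) + Q.r B := by
  rw [Finset.unionSingleton] at h ⊢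
  rw [Finset.unionSingleton]
  exact Q.submod_insert hAB hxB h

lemma zero_unique_us {ν A : Finset α} {x y : α} (hA : Q.Subtr A) (hν : ν ∈ Q.Ω)
    (hx : x ∈ ν) (hy : y ∈ ν) (hd : Disjoint ν A)
    (h1 : Q.r (A ∪ {x}) = Q.r A) (h2 : Q.r (A ∪ {y}) = Q.r A) : x = y := by
  rw [Finset.unionSingleton] at h1 h2
  exact Q.zero_unique hA hν hx hy hd h1 h2

lemma tight_exists_zero_us (hT : Q.Tight) {ν N : Finset α} (hν : ν ∈ Q.Ω)
    (hN : Q.NearTransversalAvoiding ν N) : ∃ y ∈ ν, Q.r (N ∪ {y}) = Q.r N := by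
  obtain ⟨y, hy, h⟩ := Q.tight_exists_zero hT hν hN
  exact ⟨y, hy, by rw [Finset.unionSingleton]; exact h⟩

lemma extend_subtr (F : Finset (Finset α)) (hF : F ⊆ Q.Ω) (S : Finset α) (hS : Q.Subtr S) :
    ∃ S', Q.Subtr S' ∧ S ⊆ S' ∧ S' ⊆ S ∪ F.biUnion id ∧ ∀ ω ∈ F, (S' ∩ ω).Nonempty := by
  classical
  induction F using Finset.induction_on with
  | empty => exact ⟨S, hS, Finset.Subset.refl _, by simp, by simp⟩
  | @insert ω₀ F hω₀F ih =>
    obtain ⟨S', hS', hSS', hS'sub, hmeets⟩ := ih (fun ω hω => hF (Finset.mem_insert_of_mem hω))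
    have hω₀ : ω₀ ∈ Q.Ω := hF (Finset.mem_insert_self _ _)
    by_cases hne : (S' ∩ ω₀).Nonempty
    · refine ⟨S', hS', hSS', hS'sub.trans ?_, fun ω hω => ?_⟩
      · apply Finset.union_subset_union (Finset.Subset.refl _)
        intro z hz
        rw [Finset.mem_biUnion] at hz ⊢
        obtain ⟨w, hw, hzw⟩ := hz
        exact ⟨w, Finset.mem_insert_of_mem hw, hzw⟩
      · rcases Finset.mem_insert.mp hω with rfl | hω
        · exact hne
        · exact hmeets ω hω
    · obtain ⟨x, hx⟩ := Q.classes_nonempty ω₀ hω₀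
      have hxS' : x ∉ S' := fun h => hne ⟨x, Finset.mem_inter.mpr ⟨h, hx⟩⟩
      have hsub : Q.Subtr (insert x S') := by
        refine ⟨Finset.insert_subset (Q.classes_subset _ hω₀ hx) hS'.1, fun ω hω => ?_⟩
        by_cases hc : ω = ω₀
        · subst hc
          have : insert x S' ∩ ω = {x} := by
            ext z
            simp only [Finset.mem_inter, Finset.mem_insert, Finset.mem_singleton]
            constructor
            · rintro ⟨rfl | hzS, hzω⟩
              · rfl
              · exact absurd ⟨z, Finset.mem_inter.mpr ⟨hzS, hzω⟩⟩ hne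
            · rintro rfl
              exact ⟨Or.inl rfl, hx⟩
          rw [this]; simp
        · have : insert x S' ∩ ω = S' ∩ ω := by
            ext z
            simp only [Finset.mem_inter, Finset.mem_insert]
            constructor
            · rintro ⟨rfl | hzS, hzω⟩
              · exact absurd (Q.class_eq_of_mem hω hω₀ hzω hx) hc
              · exact ⟨hzS, hzω⟩
            · rintro ⟨hzS, hzω⟩
              exact ⟨Or.inr hzS, hzω⟩
          rw [this]; exact hS'.2 ω hω
      refine ⟨insert x S', hsub, hSS'.trans (Finset.subset_insert _ _), ?_, fun ω hω => ?_⟩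
      · intro z hz
        rcases Finset.mem_insert.mp hz with rfl | hz
        · apply Finset.mem_union_right
          rw [Finset.mem_biUnion]
          exact ⟨ω₀, Finset.mem_insert_self _ _, hx⟩
        · apply Finset.union_subset_union (Finset.Subset.refl _) ?_ (hS'sub hz)
          intro w hw
          rw [Finset.mem_biUnion] at hw ⊢
          obtain ⟨v, hv, hwv⟩ := hw
          exact ⟨v, Finset.mem_insert_of_mem hv, hwv⟩
      · rcases Finset.mem_insert.mp hω with rfl | hω
        · exact ⟨x, Finset.mem_inter.mpr ⟨Finset.mem_insert_self _ _, hx⟩⟩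
        · obtain ⟨z, hz⟩ := hmeets ω hω
          exact ⟨z, Finset.mem_inter.mpr ⟨Finset.mem_insert_of_mem (Finset.mem_inter.mp hz).1,
            (Finset.mem_inter.mp hz).2⟩⟩

end Multimatroid
namespace Multimatroid

variable {α : Type*} [DecidableEq α]

lemma subtr_insert_class (Q : Multimatroid α) {A ν : Finset α} {y : α} (hA : Q.Subtr A)
    (hν : ν ∈ Q.Ω) (hy : y ∈ ν) (hd : Disjoint ν A) : Q.Subtr (A ∪ {y}) := by
  rw [Finset.unionSingleton]
  refine ⟨Finset.insert_subset (Q.classes_subset _ hν hy) hA.1, fun ω hω => ?_⟩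
  by_cases hc : ω = ν
  · subst hc
    have : insert y A ∩ ω = {y} := by
      ext z
      simp only [Finset.mem_inter, Finset.mem_insert, Finset.mem_singleton]
      constructor
      · rintro ⟨rfl | hzA, hzω⟩
        · rfl
        · exact absurd hzA (Finset.disjoint_left.mp hd hzω)
      · rintro rfl
        exact ⟨Or.inl rfl, hy⟩
    rw [this]; simp
  · have : insert y A ∩ ω = A ∩ ω := by
      ext z
      simp only [Finset.mem_inter, Finset.mem_insert]
      constructor
      · rintro ⟨rfl | hzA, hzω⟩
        · exact absurd (Q.class_eq_of_mem hω hν hzω hy) hc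
        · exact ⟨hzA, hzω⟩
      · rintro ⟨hzA, hzω⟩
        exact ⟨Or.inr hzA, hzω⟩
    rw [this]; exact hA.2 ω hω

namespace Ctx

variable (c : Ctx α)

lemma not_mem_X {x : α} (hx : x ∈ c.ωe) : x ∉ c.X :=
  fun h => Finset.disjoint_left.mp c.disj_omega_X hx h

lemma not_mem_Y {x : α} (hx : x ∈ c.ωe) : x ∉ c.Y :=
  fun h => Finset.disjoint_left.mp c.disj_omega_Y hx h

lemma X_not_mem_Y {x : α} (hx : x ∈ c.X) : x ∉ c.Y :=
  fun h => Finset.disjoint_left.mp c.disj_X_Y hx h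

lemma w_not_mem_XY {x : α} {A B : Finset α} (hx : x ∈ c.ωe) (hAX : A ⊆ c.X)
    (hBY : B ⊆ c.Y) : x ∉ A ∪ B := fun h => by
  rcases Finset.mem_union.mp h with h | h
  · exact c.not_mem_X hx (hAX h)
  · exact c.not_mem_Y hx (hBY h)

lemma Xelt_not_mem {y : α} {E B : Finset α} {x : α} (hyX : y ∈ c.X) (hyE : y ∉ E)
    (hBY : B ⊆ c.Y) (hx : x ∈ c.ωe) : y ∉ E ∪ B ∪ {x} := fun h => by
  rcases Finset.mem_union.mp h with h | h
  · rcases Finset.mem_union.mp h with h | h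
    · exact hyE h
    · exact c.X_not_mem_Y hyX (hBY h)
  · rw [Finset.mem_singleton] at h
    subst h
    exact c.not_mem_X hx hyX

lemma near_mk {E B : Finset α} {x : α} {ν : Finset α}
    (hEX : E ⊆ c.X) (hE : c.Q.Subtr E) (hBY : B ⊆ c.Y) (hB : c.Q.Subtr B)
    (hx : x ∈ c.ωe) (hν : ν ∈ c.KX) (hdisjE : Disjoint E ν)
    (hmeetsE : ∀ ω ∈ c.KX, ω ≠ ν → (E ∩ ω).Nonempty)
    (hmeetsB : ∀ ω ∈ c.KY, (B ∩ ω).Nonempty) :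
    c.Q.NearTransversalAvoiding ν (E ∪ B ∪ {x}) := by
  refine ⟨c.subtr_XYw hEX hE hBY hB hx, ?_, ?_⟩
  · rw [Finset.disjoint_left]
    intro z hz hzν
    rcases Finset.mem_union.mp hz with h | h
    · rcases Finset.mem_union.mp h with h | h
      · exact Finset.disjoint_left.mp hdisjE h hzν
      · exact c.X_not_mem_Y (c.KX_sub_X hν hzν) (hBY h)
    · rw [Finset.mem_singleton] at h
      subst h
      exact c.not_mem_X hx (c.KX_sub_X hν hzν)
  · intro ω hω hωO
    rcases c.class_trichot hω with h | h | h
    · subst h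
      exact ⟨x, Finset.mem_inter.mpr ⟨Finset.mem_union_right _ (Finset.mem_singleton_self _), hx⟩⟩
    · obtain ⟨z, hz⟩ := hmeetsE ω h (fun hc' => hωO (hc' ▸ rfl))
      obtain ⟨h1, h2⟩ := Finset.mem_inter.mp hz
      exact ⟨z, Finset.mem_inter.mpr ⟨Finset.mem_union_left _ (Finset.mem_union_left _ h1), h2⟩⟩
    · obtain ⟨z, hz⟩ := hmeetsB ω h
      obtain ⟨h1, h2⟩ := Finset.mem_inter.mp hz
      exact ⟨z, Finset.mem_inter.mpr ⟨Finset.mem_union_left _ (Finset.mem_union_right _ h1), h2⟩⟩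

lemma extend_X {C ν' : Finset α} (hCX : C ⊆ c.X) (hC : c.Q.Subtr C)
    (hν' : ν' ∈ c.KX) (hd : Disjoint ν' C) :
    ∃ E, E ⊆ c.X ∧ c.Q.Subtr E ∧ C ⊆ E ∧ Disjoint E ν' ∧
      ∀ ω ∈ c.KX, ω ≠ ν' → (E ∩ ω).Nonempty := by
  obtain ⟨E, hE, hCE, hEsub, hmeets⟩ := c.Q.extend_subtr (c.KX.erase ν')
    (fun ω hω => c.KX_mem_omega (Finset.mem_of_mem_erase hω)) C hC
  refine ⟨E, ?_, hE, hCE, ?_, fun ω hω hne => hmeets ω (Finset.mem_erase.mpr ⟨hne, hω⟩)⟩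
  · intro z hz
    rcases Finset.mem_union.mp (hEsub hz) with h | h
    · exact hCX h
    · rw [Finset.mem_biUnion] at h
      obtain ⟨w, hw, hzw⟩ := h
      exact c.KX_sub_X (Finset.mem_of_mem_erase hw) hzw
  · rw [Finset.disjoint_left]
    intro z hzE hzν
    rcases Finset.mem_union.mp (hEsub hzE) with h | h
    · exact Finset.disjoint_right.mp hd h hzν
    · rw [Finset.mem_biUnion] at h
      obtain ⟨w, hw, hzw⟩ := h
      obtain ⟨hwne, hwKX⟩ := Finset.mem_erase.mp hw
      exact Finset.disjoint_left.mp
        (c.Q.classes_disjoint _ (c.KX_mem_omega hwKX) _ (c.KX_mem_omega hν') hwne) hzw hzν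

lemma disj_KX_set {ν E T : Finset α} {x : α} (hν : ν ∈ c.KX) (hdE : Disjoint ν E)
    (hTY : T ⊆ c.Y) (hx : x ∈ c.ωe) : Disjoint ν (E ∪ T ∪ {x}) := by
  rw [Finset.disjoint_right]
  intro z hz hzν
  rcases Finset.mem_union.mp hz with h | h
  · rcases Finset.mem_union.mp h with h | h
    · exact Finset.disjoint_right.mp hdE h hzν
    · exact c.X_not_mem_Y (c.KX_sub_X hν hzν) (hTY h)
  · rw [Finset.mem_singleton] at h
    subst h
    exact c.not_mem_X hx (c.KX_sub_X hν hzν)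

end Ctx

end Multimatroid
namespace Multimatroid

variable {α : Type*} [DecidableEq α]

namespace Ctx

variable (c : Ctx α)

/-- Transfer of an `e`-zero across the separator: if `y ∈ X` is spanned over `E ∪ T ∪ {e}`,
then it is already spanned over `E`, and over `E ∪ T`. -/
lemma zero_transfer {E T : Finset α} {y : α}
    (hEX : E ⊆ c.X) (hE : c.Q.Subtr E) (hTY : T ⊆ c.Y) (hT : c.Q.Subtr T)
    (hyX : y ∈ c.X) (hEy : c.Q.Subtr (E ∪ {y}))
    (hz : c.Q.r (E ∪ T ∪ {c.e} ∪ {y}) = c.Q.r (E ∪ T ∪ {c.e})) :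
    c.Q.r (E ∪ {y}) = c.Q.r E ∧ c.Q.r (E ∪ {y} ∪ T) = c.Q.r (E ∪ T) := by
  have hEyX : E ∪ {y} ⊆ c.X := Finset.union_subset hEX (Finset.singleton_subset_iff.mpr hyX)
  have h1 : c.Q.r (E ∪ {y} ∪ T ∪ {c.e}) = c.Q.r (E ∪ {y}) + c.Q.r (T ∪ {c.e}) :=
    c.E2 hEyX hEy hTY hT
  have h2 : c.Q.r (E ∪ T ∪ {c.e}) = c.Q.r E + c.Q.r (T ∪ {c.e}) := c.E2 hEX hE hTY hT
  have hac : E ∪ {y} ∪ T ∪ {c.e} = E ∪ T ∪ {c.e} ∪ {y} := by ac_rfl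
  rw [hac, hz, h2] at h1
  have h3 : c.Q.r (E ∪ {y}) = c.Q.r E := by omega
  have h4 : c.Q.r (E ∪ {y} ∪ T) = c.Q.r (E ∪ {y}) + c.Q.r T := c.E3 hEyX hEy hTY hT
  have h5 : c.Q.r (E ∪ T) = c.Q.r E + c.Q.r T := c.E3 hEX hE hTY hT
  exact ⟨h3, by omega⟩

/-- If `y`'s `f`-zero property holds over `C`, it persists over any larger `E`. -/
lemma f_zero_up {C E T : Finset α} {y f : α}
    (hf : f ∈ c.ωe) (hTY : T ⊆ c.Y) (hT : c.Q.Subtr T)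
    (hEX : E ⊆ c.X) (hE : c.Q.Subtr E) (hCE : C ⊆ E)
    (hyX : y ∈ c.X) (hyE : y ∉ E) (hEy : c.Q.Subtr (E ∪ {y}))
    (h0 : c.Q.r (C ∪ {y} ∪ T ∪ {f}) = c.Q.r (C ∪ T ∪ {f})) :
    c.Q.r (E ∪ T ∪ {f} ∪ {y}) = c.Q.r (E ∪ T ∪ {f}) := by
  have hEyX : E ∪ {y} ⊆ c.X := Finset.union_subset hEX (Finset.singleton_subset_iff.mpr hyX)
  have hsubB : c.Q.Subtr (E ∪ T ∪ {f} ∪ {y}) := by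
    have := c.subtr_XYw hEyX hEy hTY hT hf
    have hac : E ∪ {y} ∪ T ∪ {f} = E ∪ T ∪ {f} ∪ {y} := by ac_rfl
    rwa [hac] at this
  have hyB : y ∉ E ∪ T ∪ {f} := c.Xelt_not_mem hyX hyE hTY hf
  have hsub : C ∪ T ∪ {f} ⊆ E ∪ T ∪ {f} :=
    Finset.union_subset_union (Finset.union_subset_union hCE (Finset.Subset.refl _))
      (Finset.Subset.refl _)
  have hsm := c.Q.submod_us hsub hyB hsubB
  have hac2 : C ∪ T ∪ {f} ∪ {y} = C ∪ {y} ∪ T ∪ {f} := by ac_rfl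
  rw [hac2, h0] at hsm
  have hmono : c.Q.r (E ∪ T ∪ {f}) ≤ c.Q.r (E ∪ T ∪ {f} ∪ {y}) :=
    c.Q.rank_mono (Finset.subset_union_left) hsubB
  omega

/-- Engine: if `y ∈ ν'` is an `f`-zero over a near-transversal `E ∪ T`, then `y` is
also the `e`-zero there. -/
lemma engine {E T ν' : Finset α} {y f : α}
    (hf : f ∈ c.ωe) (hTY : T ⊆ c.Y) (hT : c.Q.Subtr T)
    (hTm : ∀ ω ∈ c.KY, (T ∩ ω).Nonempty)
    (hEX : E ⊆ c.X) (hE : c.Q.Subtr E)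
    (hν' : ν' ∈ c.KX) (hdE : Disjoint ν' E)
    (hmE : ∀ ω ∈ c.KX, ω ≠ ν' → (E ∩ ω).Nonempty)
    (hy : y ∈ ν')
    (hyf0 : c.Q.r (E ∪ T ∪ {f} ∪ {y}) = c.Q.r (E ∪ T ∪ {f})) :
    c.Q.r (E ∪ T ∪ {c.e} ∪ {y}) = c.Q.r (E ∪ T ∪ {c.e}) := by
  have hν'Ω : ν' ∈ c.Q.Ω := c.KX_mem_omega hν'
  have hnear_e : c.Q.NearTransversalAvoiding ν' (E ∪ T ∪ {c.e}) :=
    c.near_mk hEX hE hTY hT c.heωe hν' hdE.symm hmE hTm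
  obtain ⟨y₁, hy₁, hz1⟩ := c.Q.tight_exists_zero_us c.hT hν'Ω hnear_e
  by_cases hcase : y₁ = y
  · subst hcase; exact hz1
  -- y₁ ≠ y
  have hy₁X : y₁ ∈ c.X := c.KX_sub_X hν' hy₁
  have hy₁E : y₁ ∉ E := Finset.disjoint_left.mp hdE hy₁
  have hEy₁ : c.Q.Subtr (E ∪ {y₁}) :=
    c.Q.subtr_insert_class hE hν'Ω hy₁ hdE
  have hdf : Disjoint ν' (E ∪ T ∪ {f}) := by
    rw [Finset.disjoint_right]
    intro z hz hzν
    rcases Finset.mem_union.mp hz with h | h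
    · rcases Finset.mem_union.mp h with h | h
      · exact Finset.disjoint_right.mp hdE h hzν
      · exact c.X_not_mem_Y (c.KX_sub_X hν' hzν) (hTY h)
    · rw [Finset.mem_singleton] at h
      subst h
      exact c.not_mem_X hf (c.KX_sub_X hν' hzν)
  have hsubf : c.Q.Subtr (E ∪ T ∪ {f}) := c.subtr_XYw hEX hE hTY hT hf
  have hy₁B : y₁ ∉ E ∪ T ∪ {f} := c.Xelt_not_mem hy₁X hy₁E hTY hf
  have hsubfy₁ : c.Q.Subtr (E ∪ T ∪ {f} ∪ {y₁}) := by
    have := c.subtr_XYw (Finset.union_subset hEX (Finset.singleton_subset_iff.mpr hy₁X))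
      hEy₁ hTY hT hf
    have hac : E ∪ {y₁} ∪ T ∪ {f} = E ∪ T ∪ {f} ∪ {y₁} := by ac_rfl
    rwa [hac] at this
  rcases c.Q.rank_us_dichot hsubfy₁ hy₁B with h1 | h1
  · -- y₁ is also an f-zero: contradicts uniqueness
    exact absurd (c.Q.zero_unique_us hsubf hν'Ω hy₁ hy hdf h1 hyf0) hcase
  · -- y₁'s rank over E∪T equals r(E∪T), contradiction via submodularity
    exfalso
    have htr := c.zero_transfer hEX hE hTY hT hy₁X hEy₁ hz1
    have hfB : f ∉ E ∪ {y₁} ∪ T := by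
      have : E ∪ {y₁} ⊆ c.X :=
        Finset.union_subset hEX (Finset.singleton_subset_iff.mpr hy₁X)
      exact c.w_not_mem_XY hf this hTY
    have hsubBf : c.Q.Subtr (E ∪ {y₁} ∪ T ∪ {f}) := by
      exact c.subtr_XYw (Finset.union_subset hEX (Finset.singleton_subset_iff.mpr hy₁X))
        hEy₁ hTY hT hf
    have hsub2 : E ∪ T ⊆ E ∪ {y₁} ∪ T :=
      Finset.union_subset_union (Finset.subset_union_left) (Finset.Subset.refl _)
    have hsm := c.Q.submod_us hsub2 hfB hsubBf
    have hac3 : E ∪ {y₁} ∪ T ∪ {f} = E ∪ T ∪ {f} ∪ {y₁} := by ac_rfl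
    rw [hac3, h1, htr.2] at hsm
    omega

/-- One-step facts for an element whose `f`-zero appears after adding it to `C`. -/
lemma hc_facts {C T : Finset α} {y f : α}
    (hf : f ∈ c.ωe) (hTY : T ⊆ c.Y) (hT : c.Q.Subtr T)
    (hCX : C ⊆ c.X) (hC : c.Q.Subtr C)
    (hyX : y ∈ c.X) (hyC : y ∉ C) (hCy : c.Q.Subtr (C ∪ {y}))
    (h1 : c.Q.r (C ∪ T ∪ {f}) = c.Q.r (C ∪ T) + 1)
    (h0 : c.Q.r (C ∪ {y} ∪ T ∪ {f}) = c.Q.r (C ∪ {y} ∪ T)) :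
    c.Q.r (C ∪ {y} ∪ T) = c.Q.r (C ∪ T) + 1 ∧
    c.Q.r (C ∪ {y} ∪ T ∪ {f}) = c.Q.r (C ∪ T ∪ {f}) := by
  have hCyX : C ∪ {y} ⊆ c.X := Finset.union_subset hCX (Finset.singleton_subset_iff.mpr hyX)
  have hsubf : c.Q.Subtr (C ∪ {y} ∪ T ∪ {f}) := c.subtr_XYw hCyX hCy hTY hT hf
  have hmono : c.Q.r (C ∪ T ∪ {f}) ≤ c.Q.r (C ∪ {y} ∪ T ∪ {f}) := by
    apply c.Q.rank_mono ?_ hsubf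
    exact Finset.union_subset_union (Finset.union_subset_union
      (Finset.subset_union_left) (Finset.Subset.refl _)) (Finset.Subset.refl _)
  have hyCT : y ∉ C ∪ T := fun h => by
    rcases Finset.mem_union.mp h with h | h
    · exact hyC h
    · exact c.X_not_mem_Y hyX (hTY h)
  have hsubCyT : c.Q.Subtr (C ∪ T ∪ {y}) := by
    have := c.subtr_XY hCyX hCy hTY hT
    have hac : C ∪ {y} ∪ T = C ∪ T ∪ {y} := by ac_rfl
    rwa [hac] at this
  have hbd := c.Q.rank_us_bounds hsubCyT hyCT
  have hac : C ∪ T ∪ {y} = C ∪ {y} ∪ T := by ac_rfl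
  rw [hac] at hbd
  omega

end Ctx

end Multimatroid
namespace Multimatroid

variable {α : Type*} [DecidableEq α]

lemma subtr_class_unique (Q : Multimatroid α) {A ν : Finset α} {x y : α} (hA : Q.Subtr A)
    (hν : ν ∈ Q.Ω) (hx : x ∈ ν) (hy : y ∈ ν) (hxA : x ∈ A) (hyA : y ∈ A) : x = y := by
  by_contra hne
  have hsub : ({x, y} : Finset α) ⊆ A ∩ ν := by
    intro z hz
    rcases Finset.mem_insert.mp hz with rfl | hz
    · exact Finset.mem_inter.mpr ⟨hxA, hx⟩
    · rw [Finset.mem_singleton] at hz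
      subst hz
      exact Finset.mem_inter.mpr ⟨hyA, hy⟩
  have h2 : ({x, y} : Finset α).card = 2 := by
    rw [Finset.card_insert_of_notMem (by simp [hne]), Finset.card_singleton]
  have := (Finset.card_le_card hsub).trans (hA.2 ν hν)
  omega

namespace Ctx

variable (c : Ctx α)

lemma count_drop {C ν' : Finset α} {y : α} (hν' : ν' ∈ c.KX) (hd : Disjoint ν' C)
    (hy : y ∈ ν') :
    (c.KX.filter (fun ν => Disjoint ν (C ∪ {y}))).card + 1 ≤
      (c.KX.filter (fun ν => Disjoint ν C)).card := by
  have hsub : c.KX.filter (fun ν => Disjoint ν (C ∪ {y})) ⊆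
      (c.KX.filter (fun ν => Disjoint ν C)).erase ν' := by
    intro ω hω
    obtain ⟨hωKX, hωd⟩ := Finset.mem_filter.mp hω
    refine Finset.mem_erase.mpr ⟨?_, Finset.mem_filter.mpr
      ⟨hωKX, hωd.mono_right (Finset.subset_union_left)⟩⟩
    intro hc'
    subst hc'
    exact Finset.disjoint_left.mp hωd hy
      (Finset.mem_union_right _ (Finset.mem_singleton_self _))
  have h1 := Finset.card_le_card hsub
  have h2 : ν' ∈ c.KX.filter (fun ν => Disjoint ν C) := Finset.mem_filter.mpr ⟨hν', hd⟩
  have h3 := Finset.card_erase_of_mem h2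
  have h4 : 1 ≤ (c.KX.filter (fun ν => Disjoint ν C)).card :=
    Finset.card_pos.mpr ⟨ν', h2⟩
  omega

/-- The key induction: if `f` is not spanned over `C ∪ T`, it is not spanned over any
`A ∪ T` with `C ⊆ A ⊆ X`. Here `T` is a transversal of the `Y`-side classes. -/
lemma claim {f : α} {T : Finset α}
    (hf : f ∈ c.ωe) (hfe : f ≠ c.e)
    (hTY : T ⊆ c.Y) (hT : c.Q.Subtr T) (hTm : ∀ ω ∈ c.KY, (T ∩ ω).Nonempty) :
    ∀ (m : ℕ) (C : Finset α), C ⊆ c.X → c.Q.Subtr C →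
    (c.KX.filter (fun ν => Disjoint ν C)).card ≤ m →
    c.Q.r (C ∪ T ∪ {f}) = c.Q.r (C ∪ T) + 1 →
    ∀ A, A ⊆ c.X → c.Q.Subtr A → C ⊆ A →
    c.Q.r (A ∪ T ∪ {f}) = c.Q.r (A ∪ T) + 1 := by
  intro m
  induction m with
  | zero =>
    intro C hCX hC hcount hCf A hAX hA hCA
    by_contra h0'
    have h0 : c.Q.r (A ∪ T ∪ {f}) = c.Q.r (A ∪ T) :=
      (c.Q.rank_us_dichot (c.subtr_XYw hAX hA hTY hT hf)
        (c.w_not_mem_XY hf hAX hTY)).resolve_right h0'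
    have hne : A ≠ C := by
      intro h
      subst h
      omega
    obtain ⟨a, haA, haC⟩ := Finset.exists_of_ssubset (lt_of_le_of_ne hCA (Ne.symm hne))
    obtain ⟨νa, hνa, haνa⟩ := c.mem_X_class (hAX haA)
    have hdνaC : Disjoint νa C := by
      rw [Finset.disjoint_left]
      intro z hzνa hzC
      exact haC ((c.Q.subtr_class_unique hA (c.KX_mem_omega hνa) hzνa haνa (hCA hzC) haA) ▸ hzC)
    have hm : νa ∈ c.KX.filter (fun ν => Disjoint ν C) := Finset.mem_filter.mpr ⟨hνa, hdνaC⟩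
    have := Finset.card_pos.mpr ⟨νa, hm⟩
    omega
  | succ m ih =>
    intro C hCX hC hcount hCf A hAX hA hCA
    by_contra h0'
    have h0 : c.Q.r (A ∪ T ∪ {f}) = c.Q.r (A ∪ T) :=
      (c.Q.rank_us_dichot (c.subtr_XYw hAX hA hTY hT hf)
        (c.w_not_mem_XY hf hAX hTY)).resolve_right h0'
    -- minimal bad set A₀
    set S : Finset (Finset α) := A.powerset.filter
      (fun A' => C ⊆ A' ∧ c.Q.r (A' ∪ T ∪ {f}) = c.Q.r (A' ∪ T)) with hSdef
    have hAS : A ∈ S := Finset.mem_filter.mpr ⟨Finset.mem_powerset_self _, hCA, h0⟩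
    obtain ⟨A₀, hA₀S, hmin⟩ := Finset.exists_min_image S Finset.card ⟨A, hAS⟩
    obtain ⟨hA₀pow, hCA₀, h0₀⟩ := Finset.mem_filter.mp hA₀S
    have hA₀A : A₀ ⊆ A := Finset.mem_powerset.mp hA₀pow
    have hA₀X : A₀ ⊆ c.X := hA₀A.trans hAX
    have hA₀sub : c.Q.Subtr A₀ := c.Q.subtr_subset hA₀A hA
    have hA₀ne : A₀ ≠ C := by
      intro h
      rw [h] at h0₀
      omega
    obtain ⟨a, haA₀, haC⟩ := Finset.exists_of_ssubset (lt_of_le_of_ne hCA₀ (Ne.symm hA₀ne))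
    obtain ⟨νa, hνa, haνa⟩ := c.mem_X_class (hA₀X haA₀)
    have hνaΩ : νa ∈ c.Q.Ω := c.KX_mem_omega hνa
    have haX : a ∈ c.X := hA₀X haA₀
    have hdνaC : Disjoint νa C := by
      rw [Finset.disjoint_left]
      intro z hzνa hzC
      exact haC ((c.Q.subtr_class_unique hA₀sub hνaΩ hzνa haνa (hCA₀ hzC) haA₀) ▸ hzC)
    have hCa : c.Q.Subtr (C ∪ {a}) := c.Q.subtr_insert_class hC hνaΩ haνa hdνaC
    have hCaX : C ∪ {a} ⊆ c.X :=
      Finset.union_subset hCX (Finset.singleton_subset_iff.mpr haX)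
    have hcount2 : (c.KX.filter (fun ν => Disjoint ν (C ∪ {a}))).card ≤ m := by
      have := c.count_drop hνa hdνaC haνa
      omega
    by_cases hca : c.Q.r (C ∪ {a} ∪ T ∪ {f}) = c.Q.r (C ∪ {a} ∪ T) + 1
    · have := ih (C ∪ {a}) hCaX hCa hcount2 hca A₀ hA₀X hA₀sub
        (Finset.union_subset hCA₀ (Finset.singleton_subset_iff.mpr haA₀))
      omega
    · have h0a : c.Q.r (C ∪ {a} ∪ T ∪ {f}) = c.Q.r (C ∪ {a} ∪ T) :=
        (c.Q.rank_us_dichot (c.subtr_XYw hCaX hCa hTY hT hf)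
          (c.w_not_mem_XY hf hCaX hTY)).resolve_right hca
      obtain ⟨haT, haTf⟩ := c.hc_facts hf hTY hT hCX hC haX haC hCa hCf h0a
      by_cases hν'ex : ∃ ν' ∈ c.KX, Disjoint ν' C ∧ ν' ≠ νa
      · -- case (α): a whole class ν' disjoint from C ∪ {a}
        obtain ⟨ν', hν', hdν'C, hν'ne⟩ := hν'ex
        have hν'Ω : ν' ∈ c.Q.Ω := c.KX_mem_omega hν'
        have hdν'A₀ : Disjoint ν' A₀ := by
          rw [Finset.disjoint_left]
          intro z hzν' hz
          rcases Finset.mem_union.mp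
            ((Finset.eq_of_subset_of_card_le
              (Finset.union_subset hCA₀ (Finset.singleton_subset_iff.mpr haA₀))
              (hmin _ (Finset.mem_filter.mpr
                ⟨Finset.mem_powerset.mpr (Finset.union_subset (hCA₀.trans hA₀A)
                  (Finset.singleton_subset_iff.mpr (hA₀A haA₀))),
                 Finset.subset_union_left, h0a⟩))) ▸ hz) with h | h
          · exact Finset.disjoint_left.mp hdν'C hzν' h
          · rw [Finset.mem_singleton] at h
            subst h
            exact hν'ne (c.Q.class_eq_of_mem hν'Ω hνaΩ hzν' haνa)
        -- key: each y in ν' has its f-zero appearing already at C ∪ {y}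
        have hkey : ∀ y ∈ ν', c.Q.r (C ∪ {y} ∪ T ∪ {f}) = c.Q.r (C ∪ T ∪ {f}) := by
          intro y hyν'
          have hyX : y ∈ c.X := c.KX_sub_X hν' hyν'
          have hyC : y ∉ C := Finset.disjoint_left.mp hdν'C hyν'
          have hCy : c.Q.Subtr (C ∪ {y}) := c.Q.subtr_insert_class hC hν'Ω hyν' hdν'C
          have hCyX : C ∪ {y} ⊆ c.X :=
            Finset.union_subset hCX (Finset.singleton_subset_iff.mpr hyX)
          have h0y : c.Q.r (C ∪ {y} ∪ T ∪ {f}) = c.Q.r (C ∪ {y} ∪ T) := by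
            by_contra hcy'
            have hcy : c.Q.r (C ∪ {y} ∪ T ∪ {f}) = c.Q.r (C ∪ {y} ∪ T) + 1 :=
              (c.Q.rank_us_dichot (c.subtr_XYw hCyX hCy hTY hT hf)
                (c.w_not_mem_XY hf hCyX hTY)).resolve_left hcy'
            have hcount2y : (c.KX.filter (fun ν => Disjoint ν (C ∪ {y}))).card ≤ m := by
              have := c.count_drop hν' hdν'C hyν'
              omega
            have hA₀y : c.Q.Subtr (A₀ ∪ {y}) :=
              c.Q.subtr_insert_class hA₀sub hν'Ω hyν' hdν'A₀
            have hA₀yX : A₀ ∪ {y} ⊆ c.X :=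
              Finset.union_subset hA₀X (Finset.singleton_subset_iff.mpr hyX)
            have hup := ih (C ∪ {y}) hCyX hCy hcount2y hcy (A₀ ∪ {y}) hA₀yX hA₀y
              (Finset.union_subset_union hCA₀ (Finset.Subset.refl _))
            have hyA₀T : f ∉ A₀ ∪ {y} ∪ T := c.w_not_mem_XY hf hA₀yX hTY
            have hsubB : c.Q.Subtr (A₀ ∪ {y} ∪ T ∪ {f}) :=
              c.subtr_XYw hA₀yX hA₀y hTY hT hf
            have hsub2 : A₀ ∪ T ⊆ A₀ ∪ {y} ∪ T :=
              Finset.union_subset_union (Finset.subset_union_left) (Finset.Subset.refl _)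
            have hsm := c.Q.submod_us hsub2 hyA₀T hsubB
            rw [hup, h0₀] at hsm
            omega
          exact (c.hc_facts hf hTY hT hCX hC hyX hyC hCy hCf h0y).2
        -- extend C to a transversal E of the X-classes other than ν'
        obtain ⟨E, hEX, hE, hCE, hdEν', hmE⟩ := c.extend_X hCX hC hν' hdν'C
        have hEe : ∀ y ∈ ν', c.Q.r (E ∪ T ∪ {c.e} ∪ {y}) = c.Q.r (E ∪ T ∪ {c.e}) := by
          intro y hyν'
          have hyX : y ∈ c.X := c.KX_sub_X hν' hyν'
          have hyE : y ∉ E := Finset.disjoint_right.mp hdEν' hyν'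
          have hEy : c.Q.Subtr (E ∪ {y}) :=
            c.Q.subtr_insert_class hE hν'Ω hyν' hdEν'.symm
          have hyf0 := c.f_zero_up hf hTY hT hEX hE hCE hyX hyE hEy (hkey y hyν')
          exact c.engine hf hTY hT hTm hEX hE hν' hdEν'.symm hmE hyν' hyf0
        obtain ⟨p, hp, q, hq, hpq⟩ := Finset.one_lt_card.mp
          (lt_of_lt_of_le one_lt_two (c.hT.1 ν' hν'Ω))
        exact hpq (c.Q.zero_unique_us (c.subtr_XYw hEX hE hTY hT c.heωe) hν'Ω hp hq
          (c.disj_KX_set hν' hdEν'.symm hTY c.heωe) (hEe p hp) (hEe q hq))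
      · -- case (β): C meets every X-class other than νa
        push_neg at hν'ex
        have hmCa : ∀ ω ∈ c.KX, ω ≠ νa → (C ∩ ω).Nonempty := by
          intro ω hω hne'
          by_contra hemp
          rw [Finset.not_nonempty_iff_eq_empty] at hemp
          have : Disjoint ω C := by
            rw [Finset.disjoint_left]
            intro z hzω hzC
            have : z ∈ C ∩ ω := Finset.mem_inter.mpr ⟨hzC, hzω⟩
            simp [hemp] at this
          exact hne' (hν'ex ω hω this)
        have hyf0 : c.Q.r (C ∪ T ∪ {f} ∪ {a}) = c.Q.r (C ∪ T ∪ {f}) := by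
          have hac : C ∪ T ∪ {f} ∪ {a} = C ∪ {a} ∪ T ∪ {f} := by ac_rfl
          rw [hac, haTf]
        have hze := c.engine hf hTY hT hTm hCX hC hνa hdνaC hmCa haνa hyf0
        have htr := c.zero_transfer hCX hC hTY hT haX hCa hze
        omega

end Ctx

end Multimatroid
namespace Multimatroid

variable {α : Type*} [DecidableEq α] (Q : Multimatroid α)

lemma rank_le_card : ∀ (n : ℕ) (S : Finset α), S.card = n → Q.Subtr S → Q.r S ≤ S.card := by
  intro n
  induction n with
  | zero =>
    intro S hc _
    rw [Finset.card_eq_zero.mp hc, Q.rank_empty, Finset.card_empty]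
  | succ n ih =>
    intro S hc hS
    obtain ⟨x, hx⟩ := Finset.card_pos.mp (show 0 < S.card by omega)
    have hins : insert x (S.erase x) = S := Finset.insert_erase hx
    have hS' : Q.Subtr (S.erase x) := Q.subtr_subset (Finset.erase_subset _ _) hS
    have hb := Q.rank_insert_bounds (by rw [hins]; exact hS) (Finset.notMem_erase _ _)
    rw [hins] at hb
    have hc' : (S.erase x).card = n := by
      rw [Finset.card_erase_of_mem hx]; omega
    have := ih (S.erase x) hc' hS'
    omega

lemma rank_ge_card_sub : ∀ (n : ℕ) {T' T : Finset α}, (T \ T').card = n → T' ⊆ T →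
    Q.Subtr T → Q.r T ≤ Q.r T' + (T \ T').card := by
  intro n
  induction n with
  | zero =>
    intro T' T hc hsub hT
    have : T ⊆ T' := fun b hb => by
      by_contra hbT
      have : b ∈ T \ T' := Finset.mem_sdiff.mpr ⟨hb, hbT⟩
      rw [Finset.card_eq_zero.mp hc] at this
      simp at this
    rw [Finset.Subset.antisymm hsub this]
    omega
  | succ n ih =>
    intro T' T hc hsub hT
    obtain ⟨x, hx⟩ := Finset.card_pos.mp (show 0 < (T \ T').card by omega)
    obtain ⟨hxT, hxT'⟩ := Finset.mem_sdiff.mp hx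
    have hsub2 : insert x T' ⊆ T := Finset.insert_subset hxT hsub
    have hc2 : (T \ insert x T').card = n := by
      have : T \ insert x T' = (T \ T').erase x := by
        ext z
        simp only [Finset.mem_sdiff, Finset.mem_insert, Finset.mem_erase]
        tauto
      rw [this, Finset.card_erase_of_mem hx, hc]
      omega
    have hb := Q.rank_insert_bounds (Q.subtr_subset hsub2 hT) hxT'
    have := ih hc2 hsub2 hT
    rw [hc]
    omega

lemma indep_subset {T' T : Finset α} (hsub : T' ⊆ T) (hT : Q.Subtr T)
    (hind : Q.r T = T.card) : Q.r T' = T'.card := by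
  have h1 := Q.rank_ge_card_sub (T \ T').card rfl hsub hT
  have h2 := Q.rank_le_card T'.card T' rfl (Q.subtr_subset hsub hT)
  have h3 : (T \ T').card = T.card - T'.card := Finset.card_sdiff_of_subset hsub
  have h4 : T'.card ≤ T.card := Finset.card_le_card hsub
  omega

lemma indep_of_all_erase : ∀ (n : ℕ) (T : Finset α), T.card = n → Q.Subtr T →
    (∀ t ∈ T, Q.r (T.erase t) ≠ Q.r T) → Q.r T = T.card := by
  intro n
  induction n with
  | zero =>
    intro T hc _ _
    rw [Finset.card_eq_zero.mp hc, Q.rank_empty, Finset.card_empty]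
  | succ n ih =>
    intro T hc hT hh
    obtain ⟨t, ht⟩ := Finset.card_pos.mp (show 0 < T.card by omega)
    have hins : insert t (T.erase t) = T := Finset.insert_erase ht
    have hb := Q.rank_insert_bounds (by rw [hins]; exact hT) (Finset.notMem_erase _ _)
    rw [hins] at hb
    have hTt : Q.r T = Q.r (T.erase t) + 1 := by
      have := hh t ht
      omega
    have hT' : Q.Subtr (T.erase t) := Q.subtr_subset (Finset.erase_subset _ _) hT
    have hh' : ∀ s ∈ T.erase t, Q.r ((T.erase t).erase s) ≠ Q.r (T.erase t) := by
      intro s hs heq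
      obtain ⟨hst, hsT⟩ := Finset.mem_erase.mp hs
      have hu : T.erase s ∪ T.erase t = T := by
        ext z
        simp only [Finset.mem_union, Finset.mem_erase]
        constructor
        · rintro (⟨_, h⟩ | ⟨_, h⟩) <;> exact h
        · intro hz
          by_cases hzs : z = s
          · exact Or.inr ⟨by rw [hzs]; exact hst, hz⟩
          · exact Or.inl ⟨hzs, hz⟩
      have hi : T.erase s ∩ T.erase t = (T.erase t).erase s := by
        ext z
        simp only [Finset.mem_inter, Finset.mem_erase]
        tauto
      have hsm := Q.rank_submod (T.erase s) (T.erase t) (by rw [hu]; exact hT)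
      rw [hu, hi, heq] at hsm
      have hmono : Q.r (T.erase s) ≤ Q.r T := Q.rank_mono (Finset.erase_subset _ _) hT
      exact hh s hsT (by omega)
    have hcc : (T.erase t).card = n := by rw [Finset.card_erase_of_mem ht]; omega
    have := ih (T.erase t) hcc hT' hh'
    omega

lemma exists_erase_rank_eq {T : Finset α} (hT : Q.Subtr T) (hlt : Q.r T < T.card) :
    ∃ t ∈ T, Q.r (T.erase t) = Q.r T := by
  by_contra h
  push_neg at h
  have := Q.indep_of_all_erase T.card T rfl hT h
  omega

lemma disj_omega_ground' {e : α} {ωe : Finset α} (hωe : ωe ∈ Q.Ω) (heωe : e ∈ ωe) :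
    Disjoint ωe (Q.minorGround {e}) := by
  rw [Finset.disjoint_right]
  intro x hx hxω
  rw [Multimatroid.minorGround, Finset.mem_biUnion] at hx
  obtain ⟨ω, hω, hxω'⟩ := hx
  obtain ⟨hωΩ, hωd⟩ := Finset.mem_filter.mp hω
  have hωeq : ω = ωe := Q.class_eq_of_mem hωΩ hωe hxω' hxω
  subst hωeq
  exact Finset.disjoint_left.mp hωd heωe (Finset.mem_singleton_self _)

/-- Case A: a subtransversal of `X` spanning `e` yields the desired circuit. -/
lemma circuit_case {e : α} {ωe X S : Finset α} (hωe : ωe ∈ Q.Ω) (heωe : e ∈ ωe)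
    (hX1 : X ⊆ Q.minorGround {e}) (hSX : S ⊆ X) (hS : Q.Subtr S)
    (hz : Q.r (S ∪ {e}) = Q.r S) :
    ∃ C, Q.IsCircuit C ∧ e ∈ C ∧ C ⊆ insert e X := by
  classical
  have heX : e ∉ X := fun h =>
    Finset.disjoint_left.mp (Q.disj_omega_ground' hωe heωe) heωe (hX1 h)
  have hdisjX : ∀ S' : Finset α, S' ⊆ X → Disjoint ωe S' := by
    intro S' hS'
    exact ((Q.disj_omega_ground' hωe heωe).mono_right hX1).mono_right hS'
  have hsubw : ∀ S' : Finset α, S' ⊆ X → Q.Subtr S' → Q.Subtr (S' ∪ {e}) := by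
    intro S' hS'X hS'
    exact Q.subtr_insert_class hS' hωe heωe (hdisjX S' hS'X)
  have hnotmem : ∀ S' : Finset α, S' ⊆ X → e ∉ S' := fun S' h hmem => heX (h hmem)
  -- minimal spanning subset T
  set F : Finset (Finset α) := S.powerset.filter (fun T => Q.r (T ∪ {e}) = Q.r T) with hF
  have hSF : S ∈ F := Finset.mem_filter.mpr ⟨Finset.mem_powerset_self _, hz⟩
  obtain ⟨T, hTF, hmin⟩ := Finset.exists_min_image F Finset.card ⟨S, hSF⟩
  obtain ⟨hTpow, hTz⟩ := Finset.mem_filter.mp hTF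
  have hTS : T ⊆ S := Finset.mem_powerset.mp hTpow
  have hTX : T ⊆ X := hTS.trans hSX
  have hTsub : Q.Subtr T := Q.subtr_subset hTS hS
  have heT : e ∉ T := hnotmem T hTX
  -- T is independent
  have hTind : Q.r T = T.card := by
    by_contra hne
    have hlt : Q.r T < T.card := lt_of_le_of_ne (Q.rank_le_card T.card T rfl hTsub) hne
    obtain ⟨t, htT, hter⟩ := Q.exists_erase_rank_eq hTsub hlt
    have h1 : Q.r (T.erase t ∪ {e}) ≤ Q.r (T ∪ {e}) :=
      Q.rank_mono (Finset.union_subset_union (Finset.erase_subset _ _) (Finset.Subset.refl _))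
        (hsubw T hTX hTsub)
    have h2 : Q.r (T.erase t) ≤ Q.r (T.erase t ∪ {e}) :=
      (Q.rank_us_bounds (hsubw _ ((Finset.erase_subset _ _).trans hTX)
        (Q.subtr_subset (Finset.erase_subset _ _) hTsub))
        (hnotmem _ ((Finset.erase_subset _ _).trans hTX))).1
    have hTe : T.erase t ∈ F := Finset.mem_filter.mpr
      ⟨Finset.mem_powerset.mpr ((Finset.erase_subset _ _).trans hTS), by omega⟩
    have := hmin _ hTe
    have := Finset.card_erase_of_mem htT
    have := Finset.card_pos.mpr ⟨t, htT⟩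
    omega
  refine ⟨T ∪ {e}, ⟨hsubw T hTX hTsub, ?_, ?_⟩, ?_, ?_⟩
  · -- dependent
    rw [hTz, hTind, Finset.unionSingleton, Finset.card_insert_of_notMem heT]
    omega
  · -- proper subsets independent
    intro C' hC'
    by_cases he' : e ∈ C'
    · set T' := C'.erase e with hT'
      have hC'eq : C' = T' ∪ {e} := by
        rw [hT', Finset.unionSingleton, Finset.insert_erase he']
      have hT'T : T' ⊆ T := by
        intro z hzT'
        obtain ⟨hze, hzC'⟩ := Finset.mem_erase.mp hzT'
        have := hC'.1 hzC'
        rw [Finset.unionSingleton, Finset.mem_insert] at this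
        tauto
      have hT'ne : T' ≠ T := by
        intro h
        apply hC'.2
        rw [hC'eq, h]
      have hT'card : T'.card < T.card :=
        Finset.card_lt_card (lt_of_le_of_ne hT'T hT'ne)
      have hT'X : T' ⊆ X := hT'T.trans hTX
      have hT'sub : Q.Subtr T' := Q.subtr_subset hT'T hTsub
      have hT'notF : Q.r (T' ∪ {e}) ≠ Q.r T' := by
        intro heq
        have : T' ∈ F := Finset.mem_filter.mpr
          ⟨Finset.mem_powerset.mpr (hT'T.trans hTS), heq⟩
        have := hmin _ this
        omega
      have hd := Q.rank_us_dichot (hsubw T' hT'X hT'sub) (hnotmem T' hT'X)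
      have hre : Q.r (T' ∪ {e}) = Q.r T' + 1 := hd.resolve_left hT'notF
      have hind := Q.indep_subset hT'T hTsub hTind
      rw [hC'eq, hre, hind, Finset.unionSingleton,
        Finset.card_insert_of_notMem (hnotmem T' hT'X)]
    · have hC'T : C' ⊆ T := by
        intro z hz
        have := hC'.1 hz
        rw [Finset.unionSingleton, Finset.mem_insert] at this
        rcases this with h | h
        · exact absurd (h ▸ hz) he'
        · exact h
      exact Q.indep_subset hC'T hTsub hTind
  · exact Finset.mem_union_right _ (Finset.mem_singleton_self _)
  · rw [Finset.unionSingleton]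
    exact Finset.insert_subset_insert _ hTX

end Multimatroid
namespace Multimatroid

variable {α : Type*} [DecidableEq α]

namespace Ctx

variable (c : Ctx α)

lemma subtr_Yw {B : Finset α} {x : α} (hBY : B ⊆ c.Y) (hB : c.Q.Subtr B)
    (hx : x ∈ c.ωe) : c.Q.Subtr (B ∪ {x}) := by
  have := c.subtr_XYw (Finset.empty_subset c.X) c.subtr_empty hBY hB hx
  rwa [Finset.empty_union] at this

lemma count_dropY {B μ : Finset α} {y : α} (hμ : μ ∈ c.KY) (hd : Disjoint μ B)
    (hy : y ∈ μ) :
    (c.KY.filter (fun ν => Disjoint ν (B ∪ {y}))).card + 1 ≤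
      (c.KY.filter (fun ν => Disjoint ν B)).card := by
  have hsub : c.KY.filter (fun ν => Disjoint ν (B ∪ {y})) ⊆
      (c.KY.filter (fun ν => Disjoint ν B)).erase μ := by
    intro ω hω
    obtain ⟨hωKY, hωd⟩ := Finset.mem_filter.mp hω
    refine Finset.mem_erase.mpr ⟨?_, Finset.mem_filter.mpr
      ⟨hωKY, hωd.mono_right (Finset.subset_union_left)⟩⟩
    intro hc'
    subst hc'
    exact Finset.disjoint_left.mp hωd hy
      (Finset.mem_union_right _ (Finset.mem_singleton_self _))
  have h1 := Finset.card_le_card hsub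
  have h2 : μ ∈ c.KY.filter (fun ν => Disjoint ν B) := Finset.mem_filter.mpr ⟨hμ, hd⟩
  have h3 := Finset.card_erase_of_mem h2
  have h4 : 1 ≤ (c.KY.filter (fun ν => Disjoint ν B)).card :=
    Finset.card_pos.mpr ⟨μ, h2⟩
  omega

/-- Extend `B` to a transversal of the `Y`-side classes keeping `f` unspanned. -/
lemma extend_B {f : α} (hf : f ∈ c.ωe) :
    ∀ (n : ℕ) (B : Finset α), B ⊆ c.Y → c.Q.Subtr B →
    (c.KY.filter (fun ν => Disjoint ν B)).card ≤ n →
    c.Q.r (B ∪ {f}) = c.Q.r B + 1 →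
    ∃ T, T ⊆ c.Y ∧ c.Q.Subtr T ∧ B ⊆ T ∧ (∀ ω ∈ c.KY, (T ∩ ω).Nonempty) ∧
      c.Q.r (T ∪ {f}) = c.Q.r T + 1 := by
  intro n
  induction n with
  | zero =>
    intro B hBY hB hcount hBf
    refine ⟨B, hBY, hB, Finset.Subset.refl _, fun ω hω => ?_, hBf⟩
    have hemp : c.KY.filter (fun ν => Disjoint ν B) = ∅ :=
      Finset.card_eq_zero.mp (le_antisymm hcount (Nat.zero_le _))
    have hnd : ¬ Disjoint ω B := fun hd => by
      have hmem : ω ∈ c.KY.filter (fun ν => Disjoint ν B) := Finset.mem_filter.mpr ⟨hω, hd⟩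
      simp [hemp] at hmem
    obtain ⟨a, haω, haB⟩ := Finset.not_disjoint_iff.mp hnd
    exact ⟨a, Finset.mem_inter.mpr ⟨haB, haω⟩⟩
  | succ n ih =>
    intro B hBY hB hcount hBf
    by_cases hall : ∀ ω ∈ c.KY, ¬ Disjoint ω B
    · refine ⟨B, hBY, hB, Finset.Subset.refl _, fun ω hω => ?_, hBf⟩
      obtain ⟨a, haω, haB⟩ := Finset.not_disjoint_iff.mp (hall ω hω)
      exact ⟨a, Finset.mem_inter.mpr ⟨haB, haω⟩⟩
    · push_neg at hall
      obtain ⟨μ, hμ, hdμB⟩ := hall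
      have hμΩ : μ ∈ c.Q.Ω := c.KY_mem_omega hμ
      obtain ⟨p, hp, q, hq, hpq⟩ := Finset.one_lt_card.mp
        (lt_of_lt_of_le one_lt_two (c.hT.1 μ hμΩ))
      have hstep : ∀ y ∈ μ, c.Q.r (B ∪ {y} ∪ {f}) = c.Q.r (B ∪ {y}) + 1 →
          ∃ T, T ⊆ c.Y ∧ c.Q.Subtr T ∧ B ⊆ T ∧ (∀ ω ∈ c.KY, (T ∩ ω).Nonempty) ∧
            c.Q.r (T ∪ {f}) = c.Q.r T + 1 := by
        intro y hy hok
        have hBy : c.Q.Subtr (B ∪ {y}) := c.Q.subtr_insert_class hB hμΩ hy hdμB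
        have hByY : B ∪ {y} ⊆ c.Y := Finset.union_subset hBY
          (Finset.singleton_subset_iff.mpr (c.KY_sub_Y hμ hy))
        have hcount2 : (c.KY.filter (fun ν => Disjoint ν (B ∪ {y}))).card ≤ n := by
          have := c.count_dropY hμ hdμB hy
          omega
        obtain ⟨T, h1, h2, h3, h4, h5⟩ := ih (B ∪ {y}) hByY hBy hcount2 hok
        exact ⟨T, h1, h2, (Finset.subset_union_left).trans h3, h4, h5⟩
      -- at least one of p, q works
      by_cases hps : c.Q.r (B ∪ {p} ∪ {f}) = c.Q.r (B ∪ {p}) + 1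
      · exact hstep p hp hps
      by_cases hqs : c.Q.r (B ∪ {q} ∪ {f}) = c.Q.r (B ∪ {q}) + 1
      · exact hstep q hq hqs
      exfalso
      have hzero : ∀ y ∈ μ, ¬ (c.Q.r (B ∪ {y} ∪ {f}) = c.Q.r (B ∪ {y}) + 1) →
          c.Q.r (B ∪ {f} ∪ {y}) = c.Q.r (B ∪ {f}) := by
        intro y hy hny
        have hBy : c.Q.Subtr (B ∪ {y}) := c.Q.subtr_insert_class hB hμΩ hy hdμB
        have hyY : y ∈ c.Y := c.KY_sub_Y hμ hy
        have hByY : B ∪ {y} ⊆ c.Y := Finset.union_subset hBY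
          (Finset.singleton_subset_iff.mpr hyY)
        have hyB : y ∉ B := Finset.disjoint_left.mp hdμB hy
        have hsubyf : c.Q.Subtr (B ∪ {y} ∪ {f}) := c.subtr_Yw hByY hBy hf
        have hfBy : f ∉ B ∪ {y} := fun h => by
          rcases Finset.mem_union.mp h with h | h
          · exact c.not_mem_Y hf (hBY h)
          · rw [Finset.mem_singleton] at h
            exact c.not_mem_Y hf (h ▸ hyY)
        have h1 : c.Q.r (B ∪ {y} ∪ {f}) = c.Q.r (B ∪ {y}) :=
          (c.Q.rank_us_dichot hsubyf hfBy).resolve_right hny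
        have hmono : c.Q.r (B ∪ {f}) ≤ c.Q.r (B ∪ {y} ∪ {f}) :=
          c.Q.rank_mono (Finset.union_subset_union (Finset.subset_union_left)
            (Finset.Subset.refl _)) hsubyf
        have hbd := c.Q.rank_us_bounds hBy hyB
        have hac : B ∪ {y} ∪ {f} = B ∪ {f} ∪ {y} := by ac_rfl
        rw [hac] at h1 hmono
        omega
      have hzp := hzero p hp hps
      have hzq := hzero q hq hqs
      have hdμBf : Disjoint μ (B ∪ {f}) := by
        rw [Finset.disjoint_right]
        intro z hz hzμ
        rcases Finset.mem_union.mp hz with h | h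
        · exact Finset.disjoint_right.mp hdμB h hzμ
        · rw [Finset.mem_singleton] at h
          subst h
          exact c.not_mem_Y hf (c.KY_sub_Y hμ hzμ)
      exact hpq (c.Q.zero_unique_us (c.subtr_Yw hBY hB hf) hμΩ hp hq hdμBf hzp hzq)

/-- No witness: if `f` is unspanned over `B ⊆ Y`, it stays unspanned over `A ∪ B`. -/
lemma no_witness {f : α} {A B : Finset α} (hf : f ∈ c.ωe) (hfe : f ≠ c.e)
    (hAX : A ⊆ c.X) (hA : c.Q.Subtr A) (hBY : B ⊆ c.Y) (hB : c.Q.Subtr B)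
    (hBf : c.Q.r (B ∪ {f}) = c.Q.r B + 1) :
    c.Q.r (A ∪ B ∪ {f}) = c.Q.r (A ∪ B) + 1 := by
  obtain ⟨T, hTY, hT, hBT, hTm, hTf⟩ := c.extend_B hf
    (c.KY.filter (fun ν => Disjoint ν B)).card B hBY hB (le_refl _) hBf
  have hTf' : c.Q.r ((∅ : Finset α) ∪ T ∪ {f}) = c.Q.r ((∅ : Finset α) ∪ T) + 1 := by
    simpa using hTf
  have hclaim := c.claim hf hfe hTY hT hTm
    (c.KX.filter (fun ν => Disjoint ν (∅ : Finset α))).card ∅ (Finset.empty_subset _)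
    c.subtr_empty (le_refl _) hTf' A hAX hA (Finset.empty_subset _)
  -- transfer down from A ∪ T to A ∪ B
  have hsub2 : A ∪ B ⊆ A ∪ T := Finset.union_subset_union (Finset.Subset.refl _) hBT
  have hfAT : f ∉ A ∪ T := c.w_not_mem_XY hf hAX hTY
  have hsubATf : c.Q.Subtr (A ∪ T ∪ {f}) := c.subtr_XYw hAX hA hTY hT hf
  have hsm := c.Q.submod_us hsub2 hfAT hsubATf
  rw [hclaim] at hsm
  have hbd := c.Q.rank_us_bounds (c.subtr_XYw hAX hA hBY hB hf)
    (c.w_not_mem_XY hf hAX hBY)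
  have hmono : c.Q.r (A ∪ B) ≤ c.Q.r (A ∪ T) :=
    c.Q.rank_mono hsub2 (c.subtr_XY hAX hA hTY hT)
  omega

/-- Under `hH`, `X` is a separator of `Q`. -/
lemma separator : c.Q.IsSeparator c.X := by
  refine ⟨c.hX1.trans c.ground_subset_U, fun ω hω => ?_, fun S hS => ?_⟩
  · rcases c.class_trichot hω with h | h | h
    · subst h
      exact Or.inr c.disj_omega_X
    · exact Or.inl (c.KX_sub_X h)
    · exact Or.inr ((c.disj_X_Y.symm).mono_left (c.KY_sub_Y h))
  · -- decomposition
    set A := S ∩ c.X with hA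
    set B := S ∩ c.Y with hB
    set W := S ∩ c.ωe with hW
    have hdecomp : S = A ∪ B ∪ W := by
      ext z
      simp only [hA, hB, hW, Finset.mem_union, Finset.mem_inter]
      constructor
      · intro hzS
        obtain ⟨ω, hω, hzω⟩ := c.Q.classes_cover z (hS.1 hzS)
        rcases c.class_trichot hω with h | h | h
        · subst h
          exact Or.inr ⟨hzS, hzω⟩
        · exact Or.inl (Or.inl ⟨hzS, c.KX_sub_X h hzω⟩)
        · exact Or.inl (Or.inr ⟨hzS, c.KY_sub_Y h hzω⟩)
      · rintro ((⟨h, _⟩ | ⟨h, _⟩) | ⟨h, _⟩) <;> exact h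
    have hsdiff : S \ c.X = B ∪ W := by
      ext z
      simp only [hB, hW, Finset.mem_sdiff, Finset.mem_union, Finset.mem_inter]
      constructor
      · intro ⟨hzS, hzX⟩
        obtain ⟨ω, hω, hzω⟩ := c.Q.classes_cover z (hS.1 hzS)
        rcases c.class_trichot hω with h | h | h
        · subst h
          exact Or.inr ⟨hzS, hzω⟩
        · exact absurd (c.KX_sub_X h hzω) hzX
        · exact Or.inl ⟨hzS, c.KY_sub_Y h hzω⟩
      · rintro (⟨h1, h2⟩ | ⟨h1, h2⟩)
        · exact ⟨h1, fun hzX => c.X_not_mem_Y hzX h2⟩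
        · exact ⟨h1, fun hzX => c.not_mem_X h2 hzX⟩
    have hAX : A ⊆ c.X := Finset.inter_subset_right
    have hBY : B ⊆ c.Y := Finset.inter_subset_right
    have hAsub : c.Q.Subtr A := c.Q.subtr_subset (Finset.inter_subset_left) hS
    have hBsub : c.Q.Subtr B := c.Q.subtr_subset (Finset.inter_subset_left) hS
    have hWcard : W.card ≤ 1 := by
      rw [hW]
      exact hS.2 c.ωe c.hωe
    by_cases hWe : W = ∅
    · rw [hsdiff, hdecomp, hWe, Finset.union_empty, Finset.union_empty]
      exact c.E3 hAX hAsub hBY hBsub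
    · obtain ⟨x, hxW⟩ := Finset.nonempty_iff_ne_empty.mpr hWe
      have hWx : W = {x} := by
        apply Finset.eq_singleton_iff_unique_mem.mpr
        refine ⟨hxW, fun y hy => ?_⟩
        by_contra hne
        have hsub : ({y, x} : Finset α) ⊆ W := by
          intro z hz
          rcases Finset.mem_insert.mp hz with rfl | hz
          · exact hy
          · rw [Finset.mem_singleton] at hz
            exact hz ▸ hxW
        have : ({y, x} : Finset α).card = 2 := by
          rw [Finset.card_insert_of_notMem (by simp [hne]), Finset.card_singleton]
        have := (Finset.card_le_card hsub).trans hWcard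
        omega
      have hxωe : x ∈ c.ωe := (Finset.mem_inter.mp (hW ▸ hxW)).2
      rw [hsdiff, hdecomp, hWx]
      by_cases hxe : x = c.e
      · subst hxe
        exact c.E2 hAX hAsub hBY hBsub
      · -- x = f ≠ e
        by_cases hBf : c.Q.r (B ∪ {x}) = c.Q.r B + 1
        · have hnw := c.no_witness hxωe hxe hAX hAsub hBY hBsub hBf
          have hE3 := c.E3 hAX hAsub hBY hBsub
          omega
        · have hfB : x ∉ B := fun h => c.not_mem_Y hxωe (hBY h)
          have h0 : c.Q.r (B ∪ {x}) = c.Q.r B :=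
            (c.Q.rank_us_dichot (c.subtr_Yw hBY hBsub hxωe) hfB).resolve_right hBf
          have hsub2 : B ⊆ A ∪ B := Finset.subset_union_right
          have hfAB : x ∉ A ∪ B := c.w_not_mem_XY hxωe hAX hBY
          have hsm := c.Q.submod_us hsub2 hfAB (c.subtr_XYw hAX hAsub hBY hBsub hxωe)
          have hbd := c.Q.rank_us_bounds (c.subtr_XYw hAX hAsub hBY hBsub hxωe) hfAB
          have hE3 := c.E3 hAX hAsub hBY hBsub
          omega

end Ctx

end Multimatroid

/-- Let `Q` be a connected tight multimatroid containing an element `e` such that `Q|e`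
is disconnected. If `X` is a proper separator of `Q|e`, then `Q` has a circuit `C` with
`e ∈ C ⊆ X ∪ {e}`. -/
theorem circuit_in_separator {α : Type*} [DecidableEq α]
    (Q : Multimatroid α) (hTight : Q.Tight) (hConn : Q.Connected)
    (e : α) (he : e ∈ Q.U) (hdisc : ¬ Q.MinorConnected {e})
    (X : Finset α) (hX : Q.IsMinorSeparator {e} X)
    (hXne : X.Nonempty) (hXprop : X ≠ Q.minorGround {e}) :
    ∃ C, Q.IsCircuit C ∧ e ∈ C ∧ C ⊆ insert e X := by
  classical
  obtain ⟨hX1, hX2, hX3⟩ := hX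
  obtain ⟨ωe, hωe, heωe⟩ := Q.classes_cover e he
  by_cases hH : ∀ A, A ⊆ X → Q.Subtr A → Q.r (A ∪ {e}) = Q.r A + 1
  · exfalso
    let c : Multimatroid.Ctx α := ⟨Q, e, X, ωe, hTight, hωe, heωe, hX1, hX2, hX3, hH⟩
    exact hConn ⟨X, c.separator, hXne, fun h => c.e_not_X (show e ∈ X by rw [h]; exact he)⟩
  · push_neg at hH
    obtain ⟨S, hSX, hSsub, hSne⟩ := hH
    have hd : Disjoint ωe S :=
      ((Q.disj_omega_ground' hωe heωe).mono_right hX1).mono_right hSX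
    have hz : Q.r (S ∪ {e}) = Q.r S := by
      have hsub := Q.subtr_insert_class hSsub hωe heωe hd
      have heS : e ∉ S := fun h => Finset.disjoint_left.mp hd heωe h
      exact (Q.rank_us_dichot hsub heS).resolve_right hSne
    exact Q.circuit_case hωe heωe hX1 hSX hSsub hz
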